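/- Let D be a digraph and let T be an out-branching of D rooted at r with the DFS property, of length t, with levels V_0, V_1, …, V_t. Let G^D be the simple graph with vertex set {0, 1, …, t} in which i and j with i > j are adjacent if and only if there is a backward arc (u, v) ∈ A with u ∈ V_i and v ∈ V_j. If c′ is a proper coloring of G^D, then the coloring c of D defined by c(v) = c′(i) whenever v ∈ V_i has all color classes acyclic; in particular, χ_A(D) ≤ χ(G^D). -/

import Mathlib

/-!
A digraph on a finite vertex type `V` is given by its arc relation `A : V → V → Prop`,
which is irreflexive (loopless).
-/

/-- `CycleOn A U ℓ` : there is a directed cycle of length `ℓ` (a sequence of `ℓ` distinct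
vertices, cyclically consecutive ones joined by arcs) all of whose vertices lie in `U`. -/
def CycleOn {V : Type*} (A : V → V → Prop) (U : Set V) (ℓ : ℕ) : Prop :=
  2 ≤ ℓ ∧ ∃ u : ZMod ℓ → V, Function.Injective u ∧ (∀ i, u i ∈ U) ∧ ∀ i, A (u i) (u (i + 1))

/-- `HasCycleLen A ℓ` : the digraph has a directed cycle of length `ℓ`. -/
def HasCycleLen {V : Type*} (A : V → V → Prop) (ℓ : ℕ) : Prop :=
  CycleOn A Set.univ ℓ

/-- A set of vertices is acyclic if the induced subdigraph has no directed cycle. -/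
def AcyclicSet {V : Type*} (A : V → V → Prop) (U : Set V) : Prop :=
  ∀ ℓ, ¬ CycleOn A U ℓ

/-- The dichromatic number: the least `k` such that the vertices can be colored with `k`
colors so that every color class is acyclic. -/
noncomputable def dichromatic {V : Type*} (A : V → V → Prop) : ℕ :=
  sInf {k | ∃ c : V → Fin k, ∀ i, AcyclicSet A {v | c v = i}}

/-- Strong connectivity: every vertex is reachable from every other by a directed path. -/
def StronglyConnected {V : Type*} (A : V → V → Prop) : Prop :=
  ∀ u v, Relation.ReflTransGen A u v

/-- `T` is an out-branching of the digraph `A` rooted at `r`: a spanning subdigraph in which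
`r` has in-degree 0, every other vertex has in-degree 1, and every vertex is reachable from
`r` (equivalently, for such in-degrees: the underlying undirected graph is a tree). -/
structure IsOutBranching {V : Type*} (A T : V → V → Prop) (r : V) : Prop where
  subdigraph : ∀ u v, T u v → A u v
  root_indeg_zero : ∀ u, ¬ T u r
  indeg_one : ∀ v, v ≠ r → ∃! u, T u v
  reach : ∀ v, Relation.ReflTransGen T r v

/-- `Descendant T anc des` : `des` is a descendant of `anc` in `T`
(`anc` is an ancestor of `des`). -/
def Descendant {V : Type*} (T : V → V → Prop) (anc des : V) : Prop :=
  des ≠ anc ∧ Relation.ReflTransGen T anc des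

/-- `(u,v)` is a backward arc of `A` with respect to `T`: it is an arc and `u` is a
descendant of `v` in `T`. -/
def BackwardArc {V : Type*} (A T : V → V → Prop) (u v : V) : Prop :=
  A u v ∧ Descendant T v u

/-- `T` has the DFS property: every directed cycle of `A` contains a backward arc. -/
def DFSProperty {V : Type*} (A T : V → V → Prop) : Prop :=
  ∀ (ℓ : ℕ) (u : ZMod ℓ → V), 2 ≤ ℓ → Function.Injective u →
    (∀ i, A (u i) (u (i + 1))) → ∃ i, BackwardArc A T (u i) (u (i + 1))

/-- `TWalkLen T a b n` : there is a directed walk of length `n` from `a` to `b` in `T`.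
For an out-branching `T` rooted at `r`, the `i`-th level is `{v | TWalkLen T r v i}`
(the walk from the root being the unique path `P_v`). -/
def TWalkLen {V : Type*} (T : V → V → Prop) (a b : V) (n : ℕ) : Prop :=
  ∃ w : Fin (n + 1) → V, w 0 = a ∧ w (Fin.last n) = b ∧
    ∀ j : Fin n, T (w j.castSucc) (w j.succ)


private lemma twalk_zero' {V : Type*} {T : V → V → Prop} {a b : V} :
    TWalkLen T a b 0 ↔ a = b := by
  constructor
  · rintro ⟨w, h0, hl, -⟩
    rw [← h0, ← hl]
    rfl
  · rintro rfl
    exact ⟨fun _ => a, rfl, rfl, fun j => j.elim0⟩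

private lemma twalk_succ' {V : Type*} {T : V → V → Prop} {a b : V} {n : ℕ} :
    TWalkLen T a b (n + 1) ↔ ∃ c, TWalkLen T a c n ∧ T c b := by
  constructor
  · rintro ⟨w, h0, hl, hs⟩
    refine ⟨w (Fin.castSucc (Fin.last n)),
      ⟨fun j => w j.castSucc, by simpa using h0, rfl, ?_⟩, ?_⟩
    · intro j
      have := hs j.castSucc
      rw [Fin.succ_castSucc] at this
      exact this
    · have := hs (Fin.last n)
      simpa [Fin.succ_last, hl] using this
  · rintro ⟨c, ⟨w, h0, hl, hs⟩, hT⟩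
    refine ⟨Fin.snoc w b, ?_, ?_, ?_⟩
    · have : (0 : Fin (n + 2)) = Fin.castSucc 0 := rfl
      rw [this, Fin.snoc_castSucc, h0]
    · simpa using Fin.snoc_last (α := fun _ => V) b w
    · intro j
      refine Fin.lastCases ?_ ?_ j
      · have h1 : (Fin.last n).castSucc = Fin.castSucc (Fin.last n) := rfl
        have h2 : (Fin.last n).succ = Fin.last (n + 1) := Fin.succ_last n
        rw [h1, h2, Fin.snoc_castSucc, Fin.snoc_last, hl]
        exact hT
      · intro j0
        have h1 : (j0.castSucc).castSucc = Fin.castSucc j0.castSucc := rfl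
        have h2 : (j0.castSucc).succ = Fin.castSucc j0.succ := Fin.succ_castSucc j0
        rw [h1, h2, Fin.snoc_castSucc, Fin.snoc_castSucc]
        exact hs j0

private lemma rtg_twalk' {V : Type*} {T : V → V → Prop} {a b : V}
    (h : Relation.ReflTransGen T a b) : ∃ n, TWalkLen T a b n := by
  induction h with
  | refl => exact ⟨0, twalk_zero'.mpr rfl⟩
  | tail _ hstep ih =>
      obtain ⟨n, hw⟩ := ih
      exact ⟨n + 1, twalk_succ'.mpr ⟨_, hw, hstep⟩⟩

private lemma acyclic_mono' {V : Type*} {A : V → V → Prop} {S U : Set V}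
    (h : U ⊆ S) (hS : AcyclicSet A S) : AcyclicSet A U := by
  rintro ℓ ⟨h2, u, hi, hm, ha⟩
  exact hS ℓ ⟨h2, u, hi, fun i => h (hm i), ha⟩

/-- Let `T` be an out-branching of `D` rooted at `r` with the DFS property, of length `t`,
with levels `V_i`, and let `G` be the simple graph on `{0, …, t}` in which two levels are
adjacent iff some backward arc joins them. For every proper coloring `c'` of `G`, the
induced coloring of `D` (giving `v ∈ V_i` the color `c' i`) has all color classes
acyclic; in particular `χ_A(D) ≤ χ(G)`. -/
theorem stmt_13 {V : Type*} [Fintype V] (A T : V → V → Prop) (hloopless : Irreflexive A)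
    (r : V) (hT : IsOutBranching A T r) (hDFS : DFSProperty A T)
    (t : ℕ) (htne : ∃ v, TWalkLen T r v t)
    (htmax : ∀ v i, TWalkLen T r v i → i ≤ t)
    (G : SimpleGraph (Fin (t + 1)))
    (hG : ∀ i j : Fin (t + 1), G.Adj i j ↔
      ∃ u v, BackwardArc A T u v ∧
        ((TWalkLen T r u i.1 ∧ TWalkLen T r v j.1) ∨
          (TWalkLen T r u j.1 ∧ TWalkLen T r v i.1))) :
    (∀ c' : Fin (t + 1) → ℕ, (∀ i j, G.Adj i j → c' i ≠ c' j) →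
      ∀ n : ℕ, AcyclicSet A {v | ∃ i : Fin (t + 1), TWalkLen T r v i.1 ∧ c' i = n}) ∧
      (dichromatic A : ℕ∞) ≤ G.chromaticNumber := by
  have part1 : ∀ c' : Fin (t + 1) → ℕ, (∀ i j, G.Adj i j → c' i ≠ c' j) →
      ∀ n : ℕ, AcyclicSet A {v | ∃ i : Fin (t + 1), TWalkLen T r v i.1 ∧ c' i = n} := by
    intro c' hc' n ℓ hcyc
    obtain ⟨h2, u, hinj, hmem, harc⟩ := hcyc
    obtain ⟨k, hBA⟩ := hDFS ℓ u h2 hinj harc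
    obtain ⟨iu, hwu, hcu⟩ := hmem k
    obtain ⟨jv, hwv, hcv⟩ := hmem (k + 1)
    have hadj : G.Adj iu jv :=
      (hG iu jv).mpr ⟨u k, u (k + 1), hBA, Or.inl ⟨hwu, hwv⟩⟩
    exact hc' iu jv hadj (hcu.trans hcv.symm)
  refine ⟨part1, ?_⟩
  have hlvl : ∀ v : V, ∃ i : Fin (t + 1), TWalkLen T r v i.1 := by
    intro v
    obtain ⟨m, hm⟩ := rtg_twalk' (hT.reach v)
    exact ⟨⟨m, Nat.lt_succ_of_le (htmax v m hm)⟩, hm⟩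
  choose lvl hlvl' using hlvl
  have hcol : G.Colorable (ENat.toNat G.chromaticNumber) :=
    G.colorable_chromaticNumber_of_fintype
  set n := ENat.toNat G.chromaticNumber with hn
  obtain ⟨C⟩ := hcol
  have hmemS : n ∈ {k | ∃ c : V → Fin k, ∀ i, AcyclicSet A {v | c v = i}} := by
    refine ⟨fun v => C (lvl v), fun j => ?_⟩
    have hsub : {v | C (lvl v) = j} ⊆
        {v | ∃ i : Fin (t + 1), TWalkLen T r v i.1 ∧ (fun i => ((C i : Fin n) : ℕ)) i = (j : ℕ)} := by
      intro v hv
      exact ⟨lvl v, hlvl' v, by simp [Set.mem_setOf_eq.mp hv]⟩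
    refine acyclic_mono' hsub (part1 (fun i => ((C i : Fin n) : ℕ)) ?_ (j : ℕ))
    intro i j' hadj h
    exact C.valid hadj (Fin.val_injective h)
  have hle : dichromatic A ≤ n := Nat.sInf_le hmemS
  have hne : G.chromaticNumber ≠ ⊤ := by
    have := (G.colorable_of_fintype).chromaticNumber_le
    exact ne_top_of_le_ne_top (ENat.coe_ne_top _) this
  have heq : (n : ℕ∞) = G.chromaticNumber := ENat.coe_toNat hne
  rw [← heq]
  exact_mod_cast hle
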